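/- For each n ∈ ℕ, the isometric isomorphism f_n induced by the equivalence bimodule pair (X ⊗ M_n(ℂ), Y ⊗ M_n(ℂ)) between the inclusions M_n(A) ⊂ M_n(C) and M_n(B) ⊂ M_n(D) satisfies f_n(φ ⊗ id_{M_n(ℂ)}) = f(φ) ⊗ id_{M_n(ℂ)} for every bounded A-bimodule linear map φ : C → A. -/

import Mathlib

/-- A pair `(X, Y)` implementing a strong Morita equivalence of unital inclusions
`A ⊆ C` and `B ⊆ D` of unital C*-algebras: `Y` is a `C`–`D`-equivalence bimodule and
`X` is a closed subspace of `Y` which is an `A`–`B`-equivalence bimodule with the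
restricted actions and inner products. -/
structure MoritaPair
    (A : Type*) [NormedRing A] [StarRing A] [CStarRing A] [NormedAlgebra ℂ A]
      [CompleteSpace A] [StarModule ℂ A]
    (C : Type*) [NormedRing C] [StarRing C] [CStarRing C] [NormedAlgebra ℂ C]
      [CompleteSpace C] [StarModule ℂ C]
    (B : Type*) [NormedRing B] [StarRing B] [CStarRing B] [NormedAlgebra ℂ B]
      [CompleteSpace B] [StarModule ℂ B]
    (D : Type*) [NormedRing D] [StarRing D] [CStarRing D] [NormedAlgebra ℂ D]
      [CompleteSpace D] [StarModule ℂ D]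
    (X : Type*) [NormedAddCommGroup X] [NormedSpace ℂ X]
    (Y : Type*) [NormedAddCommGroup Y] [NormedSpace ℂ Y] [CompleteSpace Y] where
  /-- the unital isometric *-embedding of `A` into `C` -/
  ιA : A →⋆ₐ[ℂ] C
  /-- the unital isometric *-embedding of `B` into `D` -/
  ιB : B →⋆ₐ[ℂ] D
  ιA_isometry : Isometry ιA
  ιB_isometry : Isometry ιB
  /-- the inclusion of the closed subspace `X` into `Y` -/
  incl : X →ₗ[ℂ] Y
  incl_norm : ∀ x, ‖incl x‖ = ‖x‖
  incl_closed : IsClosed (Set.range incl)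
  /-- left action of `C` on `Y` -/
  lC : C → Y → Y
  lC_one : ∀ y, lC 1 y = y
  lC_mul : ∀ c c' y, lC (c * c') y = lC c (lC c' y)
  lC_add_right : ∀ c y y', lC c (y + y') = lC c y + lC c y'
  lC_add_left : ∀ c c' y, lC (c + c') y = lC c y + lC c' y
  lC_smul : ∀ (z : ℂ) c y, lC (z • c) y = z • lC c y
  /-- right action of `D` on `Y` -/
  rD : Y → D → Y
  rD_one : ∀ y, rD y 1 = y
  rD_mul : ∀ y d d', rD y (d * d') = rD (rD y d) d'
  rD_add_left : ∀ y y' d, rD (y + y') d = rD y d + rD y' d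
  rD_add_right : ∀ y d d', rD y (d + d') = rD y d + rD y d'
  rD_smul : ∀ (z : ℂ) y d, rD y (z • d) = z • rD y d
  smul_assoc : ∀ c y d, rD (lC c y) d = lC c (rD y d)
  /-- the left `C`-valued inner product on `Y` -/
  innC : Y → Y → C
  innC_add_left : ∀ y y' z, innC (y + y') z = innC y z + innC y' z
  innC_star : ∀ y z, star (innC y z) = innC z y
  innC_lC : ∀ c y z, innC (lC c y) z = c * innC y z
  innC_norm : ∀ y, ‖innC y y‖ = ‖y‖ ^ 2
  /-- the right `D`-valued inner product on `Y` -/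
  innD : Y → Y → D
  innD_add_right : ∀ y z z', innD y (z + z') = innD y z + innD y z'
  innD_star : ∀ y z, star (innD y z) = innD z y
  innD_rD : ∀ y z d, innD y (rD z d) = innD y z * d
  innD_norm : ∀ y, ‖innD y y‖ = ‖y‖ ^ 2
  imprimitivity : ∀ y z w, lC (innC y z) w = rD y (innD z w)
  innC_full : (Submodule.span ℂ {c : C | ∃ y z, innC y z = c}).topologicalClosure = ⊤
  innD_full : (Submodule.span ℂ {d : D | ∃ y z, innD y z = d}).topologicalClosure = ⊤
  /-- left action of `A` on `X`, the restriction of the `C`-action -/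
  lA : A → X → X
  lA_compat : ∀ a x, incl (lA a x) = lC (ιA a) (incl x)
  /-- right action of `B` on `X`, the restriction of the `D`-action -/
  rB : X → B → X
  rB_compat : ∀ x b, incl (rB x b) = rD (incl x) (ιB b)
  /-- the left `A`-valued inner product on `X`, the restriction of `innC` -/
  innA : X → X → A
  innA_compat : ∀ x z, ιA (innA x z) = innC (incl x) (incl z)
  /-- the right `B`-valued inner product on `X`, the restriction of `innD` -/
  innB : X → X → B
  innB_compat : ∀ x z, ιB (innB x z) = innD (incl x) (incl z)
  innA_full : (Submodule.span ℂ {a : A | ∃ x z, innA x z = a}).topologicalClosure = ⊤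
  innB_full : (Submodule.span ℂ {b : B | ∃ x z, innB x z = b}).topologicalClosure = ⊤

variable {A : Type*} [NormedRing A] [StarRing A] [CStarRing A] [NormedAlgebra ℂ A]
  [CompleteSpace A] [StarModule ℂ A]
variable {C : Type*} [NormedRing C] [StarRing C] [CStarRing C] [NormedAlgebra ℂ C]
  [CompleteSpace C] [StarModule ℂ C]
variable {B : Type*} [NormedRing B] [StarRing B] [CStarRing B] [NormedAlgebra ℂ B]
  [CompleteSpace B] [StarModule ℂ B]
variable {D : Type*} [NormedRing D] [StarRing D] [CStarRing D] [NormedAlgebra ℂ D]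
  [CompleteSpace D] [StarModule ℂ D]
variable {X : Type*} [NormedAddCommGroup X] [NormedSpace ℂ X]
variable {Y : Type*} [NormedAddCommGroup Y] [NormedSpace ℂ Y] [CompleteSpace Y]

/-- the isometric isomorphism `f_n` induced by the pair
`(X ⊗ M_n(ℂ), Y ⊗ M_n(ℂ))` between the matrix inclusions `M_n(A) ⊆ M_n(C)` and
`M_n(B) ⊆ M_n(D)` satisfies `f_n(φ ⊗ id) = f(φ) ⊗ id`.  Here `X ⊗ M_n(ℂ)` is realized as
`n × n`-matrices over `X`, the module actions and inner products being given by matrix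
multiplication, `f(φ)` is characterized by `⟨x·f(φ)(d), z⟩_A = φ(⟨x·d, z⟩_C)` and `f_n` of
`φ ⊗ id` by the corresponding matrix-level characterization. -/
theorem stmt12 (M : MoritaPair A C B D X Y) (n : ℕ) (φ : C →L[ℂ] A)
    (hφ : ∀ (a : A) (c : C), φ (M.ιA a * c) = a * φ c ∧ φ (c * M.ιA a) = φ c * a)
    (ψ : D →L[ℂ] B)
    (hψ : ∀ (d : D) (x z : X),
      M.innA (M.rB x (ψ d)) z = φ (M.innC (M.rD (M.incl x) d) (M.incl z)))
    (ψn : Matrix (Fin n) (Fin n) D → Matrix (Fin n) (Fin n) B)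
    (hψn : ∀ (dM : Matrix (Fin n) (Fin n) D)
        (xM zM : Matrix (Fin n) (Fin n) X) (i j : Fin n),
      ∑ k, M.innA (∑ l, M.rB (xM i l) (ψn dM l k)) (zM j k)
        = ∑ k, φ (M.innC (∑ l, M.rD (M.incl (xM i l)) (dM l k)) (M.incl (zM j k)))) :
    ∀ (dM : Matrix (Fin n) (Fin n) D) (i j : Fin n), ψn dM i j = ψ (dM i j) := by
  intro dM i j
  have hιA : Function.Injective M.ιA := M.ιA_isometry.injective
  have hιB : Function.Injective M.ιB := M.ιB_isometry.injective
  have hincl : Function.Injective M.incl := by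
    intro a b h
    have h1 := M.incl_norm (a - b)
    rw [map_sub, h, sub_self, norm_zero] at h1
    exact sub_eq_zero.1 (norm_eq_zero.1 h1.symm)
  have hrD0r : ∀ y, M.rD y (0 : D) = 0 := by
    intro y
    have := M.rD_add_right y 0 0
    rw [add_zero] at this
    exact (left_eq_add.1 this)
  have hrD0l : ∀ d, M.rD (0 : Y) d = 0 := by
    intro d
    have := M.rD_add_left 0 0 d
    rw [add_zero] at this
    exact (left_eq_add.1 this)
  have hinnC0l : ∀ z, M.innC (0 : Y) z = 0 := by
    intro z
    have := M.innC_add_left 0 0 z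
    rw [add_zero] at this
    exact (left_eq_add.1 this)
  have hinnC0r : ∀ y, M.innC y (0 : Y) = 0 := by
    intro y
    have := M.innC_star y 0
    rw [hinnC0l] at this
    exact star_eq_zero.1 this
  have hrB0l : ∀ b0 : B, M.rB (0 : X) b0 = 0 := by
    intro b0
    apply hincl
    rw [M.rB_compat, map_zero, hrD0l]
  have hinnA0r : ∀ w : X, M.innA w (0 : X) = 0 := by
    intro w
    apply hιA
    rw [M.innA_compat, map_zero, map_zero, hinnC0r]
  have hinnCsub : ∀ y y' z, M.innC (y - y') z = M.innC y z - M.innC y' z := by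
    intro y y' z
    have := M.innC_add_left (y - y') y' z
    rw [sub_add_cancel] at this
    rw [this]; abel
  set b : B := ψn dM i j with hb
  set b' : B := ψ (dM i j) with hb'
  -- Step 1: entrywise identity from hψn using concentrated matrices
  have key : ∀ x z : X, M.innA (M.rB x b) z = M.innA (M.rB x b') z := by
    intro x z
    have h := hψn dM (fun _ l => if l = i then x else 0) (fun _ k => if k = j then z else 0) i j
    have e1 : ∀ k, (∑ l, M.rB (if l = i then x else 0) (ψn dM l k)) = M.rB x (ψn dM i k) := by
      intro k
      rw [Finset.sum_eq_single i]
      · simp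
      · intro l _ hl; simp [hl, hrB0l]
      · simp
    have e2 : ∀ k, (∑ l, M.rD (M.incl (if l = i then x else 0)) (dM l k))
        = M.rD (M.incl x) (dM i k) := by
      intro k
      rw [Finset.sum_eq_single i]
      · simp
      · intro l _ hl; simp [hl, hrD0l]
      · simp
    simp only [e1, e2] at h
    have e3 : (∑ k, M.innA (M.rB x (ψn dM i k)) (if k = j then z else 0))
        = M.innA (M.rB x b) z := by
      rw [Finset.sum_eq_single j]
      · simp [hb]
      · intro k _ hk; simp [hk, hinnA0r]
      · simp
    have e4 : (∑ k, φ (M.innC (M.rD (M.incl x) (dM i k)) (M.incl (if k = j then z else 0))))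
        = φ (M.innC (M.rD (M.incl x) (dM i j)) (M.incl z)) := by
      rw [Finset.sum_eq_single j]
      · simp
      · intro k _ hk; simp [hk, hinnC0r]
      · simp
    rw [e3, e4] at h
    rw [h, ← hψ]
  -- Step 2: rB x b = rB x b'
  have step2 : ∀ x : X, M.rB x b = M.rB x b' := by
    intro x
    set p : X := M.rB x b
    set q : X := M.rB x b'
    have hz : ∀ z : X, M.innC (M.incl (p - q)) (M.incl z) = 0 := by
      intro z
      rw [map_sub, hinnCsub, ← M.innA_compat, ← M.innA_compat, key x z, sub_self]
    have h0 : M.incl (p - q) = 0 := by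
      have hnn := M.innC_norm (M.incl (p - q))
      rw [hz (p - q), norm_zero] at hnn
      have : ‖M.incl (p - q)‖ = 0 := by
        nlinarith [norm_nonneg (M.incl (p - q))]
      exact norm_eq_zero.1 this
    have : ‖p - q‖ = 0 := by rw [← M.incl_norm, h0, norm_zero]
    have := sub_eq_zero.1 (norm_eq_zero.1 this)
    exact this
  -- Step 3: innB z x * b = innB z x * b'
  have hmulB : ∀ z x b0, M.innB z (M.rB x b0) = M.innB z x * b0 := by
    intro z x b0
    apply hιB
    rw [map_mul, M.innB_compat, M.innB_compat, M.rB_compat, M.innD_rD]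
  have step3 : ∀ x z : X, M.innB z x * b = M.innB z x * b' := by
    intro x z
    rw [← hmulB, ← hmulB, step2 x]
  -- Step 4: fullness
  set g : B →L[ℂ] B := (ContinuousLinearMap.mul ℂ B).flip (b - b') with hg
  have hker : (Submodule.span ℂ {b0 : B | ∃ x z, M.innB x z = b0}) ≤ LinearMap.ker (g : B →ₗ[ℂ] B) := by
    rw [Submodule.span_le]
    rintro _ ⟨x, z, rfl⟩
    simp only [SetLike.mem_coe, LinearMap.mem_ker]
    show M.innB x z * (b - b') = 0
    rw [mul_sub, step3 z x, sub_self]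
  have hcl : (Submodule.span ℂ {b0 : B | ∃ x z, M.innB x z = b0}).topologicalClosure
      ≤ LinearMap.ker (g : B →ₗ[ℂ] B) :=
    Submodule.topologicalClosure_minimal _ hker (ContinuousLinearMap.isClosed_ker g)
  rw [M.innB_full] at hcl
  have h1 : g 1 = 0 := hcl (Submodule.mem_top (R := ℂ) (M := B))
  have : (1 : B) * (b - b') = 0 := h1
  rw [one_mul, sub_eq_zero] at this
  exact this
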